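/- Let {r_k}, {s_k} be sequences of nonnegative reals, and let γ, μ, A, B, C, ρ, M, D₁, D₂ ≥ 0 with ρ ≤ 1, M > B/ρ, γ ≤ min(1/μ, 1/(A + C·M)). Suppose there is a nonnegative sequence {F_k} such that r_{k+1} ≤ (1 − γμ)r_k + Bγ²s_k + D₁γ² − 2γ(1 − Aγ)F_k and s_{k+1} ≤ (1 − ρ)s_k + 2C·F_k + D₂. Then with V_k = r_k + Mγ²s_k, V_{k+1} ≤ (1 − min(γμ, ρ − B/M)) V_k + (D₁ + M D₂)γ². -/
import Mathlib

set_option maxHeartbeats 1000000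


theorem unified_one_step (r s F : ℕ → ℝ) (γ μ A B C ρ M D₁ D₂ : ℝ)
    (hr : ∀ k, 0 ≤ r k) (hs : ∀ k, 0 ≤ s k) (hF : ∀ k, 0 ≤ F k)
    (hγ : 0 ≤ γ) (hμ : 0 ≤ μ) (hA : 0 ≤ A) (hB : 0 ≤ B) (hC : 0 ≤ C)
    (hρ0 : 0 ≤ ρ) (hρ1 : ρ ≤ 1) (hM0 : 0 ≤ M) (hD₁ : 0 ≤ D₁) (hD₂ : 0 ≤ D₂)
    (hM : M > B / ρ) (hγle : γ ≤ min (1 / μ) (1 / (A + C * M)))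
    (hrec1 : ∀ k, r (k + 1) ≤ (1 - γ * μ) * r k + B * γ ^ 2 * s k + D₁ * γ ^ 2
      - 2 * γ * (1 - A * γ) * F k)
    (hrec2 : ∀ k, s (k + 1) ≤ (1 - ρ) * s k + 2 * C * F k + D₂) :
    ∀ k, r (k + 1) + M * γ ^ 2 * s (k + 1) ≤
      (1 - min (γ * μ) (ρ - B / M)) * (r k + M * γ ^ 2 * s k) + (D₁ + M * D₂) * γ ^ 2 := by
  intro k
  have hMpos : 0 < M := lt_of_le_of_lt (by positivity) hM
  have hγAC : γ * (A + C * M) ≤ 1 := by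
    rcases eq_or_lt_of_le (by positivity : (0:ℝ) ≤ A + C * M) with h | h
    · rw [← h]; simp
    · have := le_trans hγle (min_le_right _ _)
      calc γ * (A + C * M) ≤ (1 / (A + C * M)) * (A + C * M) := by nlinarith
        _ = 1 := by field_simp
  have hBM : M * (B / M) = B := mul_div_cancel₀ B (ne_of_gt hMpos)
  set m := min (γ * μ) (ρ - B / M) with hm
  have hm1 : m ≤ γ * μ := min_le_left _ _
  have hm2 : m ≤ ρ - B / M := min_le_right _ _
  have h1 := hrec1 k
  have h2 := hrec2 k
  have hγ2 : 0 ≤ M * γ ^ 2 := by positivity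
  have h2' : M * γ ^ 2 * s (k + 1) ≤ M * γ ^ 2 * ((1 - ρ) * s k + 2 * C * F k + D₂) :=
    mul_le_mul_of_nonneg_left h2 hγ2
  have hFterm : M * γ ^ 2 * (2 * C * F k) ≤ 2 * γ * (1 - A * γ) * F k := by
    nlinarith [hF k, mul_nonneg hγ (hF k)]
  have hsterm : B * γ ^ 2 * s k + M * γ ^ 2 * ((1 - ρ) * s k) ≤ (1 - m) * (M * γ ^ 2 * s k) := by
    have hkey : B * γ ^ 2 + M * γ ^ 2 * (1 - ρ) ≤ (1 - m) * (M * γ ^ 2) := by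
      have h3 : (ρ - B / M) * (M * γ ^ 2) ≤ 0 ∨ True := Or.inr trivial
      have := mul_le_mul_of_nonneg_right hm2 hγ2
      nlinarith [hBM, sq_nonneg γ]
    nlinarith [hs k, mul_le_mul_of_nonneg_right hkey (hs k)]
  have hrterm : (1 - γ * μ) * r k ≤ (1 - m) * r k :=
    mul_le_mul_of_nonneg_right (by linarith) (hr k)
  have hexp : (1 - m) * (r k + M * γ ^ 2 * s k) + (D₁ + M * D₂) * γ ^ 2
      = (1 - m) * r k + (1 - m) * (M * γ ^ 2 * s k) + D₁ * γ ^ 2 + M * γ ^ 2 * D₂ := by ring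
  have h2'' : M * γ ^ 2 * s (k + 1)
      ≤ M * γ ^ 2 * ((1 - ρ) * s k) + M * γ ^ 2 * (2 * C * F k) + M * γ ^ 2 * D₂ := by
    nlinarith [h2']
  linarith [hFterm, hsterm, hrterm, h1, h2'', hexp.ge]
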